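/- For every u ∈ s and every integer K ≥ 1 with K ≥ min{ ‖x̂_0 − u‖²/(λε), (1/(μλ_μ))·log(μ‖x̂_0 − u‖²/ε + 1) } (where λ_μ := λ/(1 + λμ) and, for μ = 0, the second term of the minimum is interpreted as the first), one has min_{1 ≤ k ≤ K} ( φ(ŷ_k) − φ(u) ) ≤ ε. -/

import Mathlib

open scoped RealInnerProductSpace
open Filter Topology

lemma strong_min {E : Type*} [NormedAddCommGroup E] [InnerProductSpace ℝ E]
    {s : Set E} (hsconv : Convex ℝ s) {σ : ℝ} {g : E → ℝ}
    (hg : ConvexOn ℝ s (fun z => g z - σ / 2 * ‖z‖ ^ 2))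
    {x : E} (hx : x ∈ s) (hmin : IsMinOn g s x) :
    ∀ u ∈ s, g x + σ / 2 * ‖u - x‖ ^ 2 ≤ g u := by
  intro u hu
  have key : ∀ t ∈ Set.Ioo (0:ℝ) 1, σ / 2 * (1 - t) * ‖u - x‖ ^ 2 ≤ g u - g x := by
    rintro t ⟨ht0, ht1⟩
    have hz : (1 - t) • x + t • u ∈ s := hsconv hx hu (by linarith) ht0.le (by ring)
    have hc := hg.2 hx hu (show (0:ℝ) ≤ 1 - t by linarith) ht0.le (by ring)
    have hgz : g x ≤ g ((1 - t) • x + t • u) := hmin hz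
    have hnorm : ‖(1 - t) • x + t • u‖ ^ 2
        = (1 - t) * ‖x‖ ^ 2 + t * ‖u‖ ^ 2 - t * (1 - t) * ‖u - x‖ ^ 2 := by
      rw [norm_add_sq_real, norm_sub_sq_real, norm_smul, norm_smul,
        real_inner_smul_left, real_inner_smul_right, real_inner_comm u x,
        Real.norm_eq_abs, Real.norm_eq_abs, abs_of_pos ht0,
        abs_of_nonneg (show (0:ℝ) ≤ 1 - t by linarith)]
      ring
    simp only [smul_eq_mul] at hc
    rw [hnorm] at hc
    have h1 : σ / 2 * (1 - t) * ‖u - x‖ ^ 2 * t ≤ (g u - g x) * t := by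
      nlinarith [hc, hgz]
    exact le_of_mul_le_mul_right h1 ht0
  have hlim : Tendsto (fun t : ℝ => σ / 2 * (1 - t) * ‖u - x‖ ^ 2) (𝓝[>] (0:ℝ))
      (𝓝 (σ / 2 * (1 - 0) * ‖u - x‖ ^ 2)) := by
    apply Tendsto.mono_left _ nhdsWithin_le_nhds
    exact (Continuous.tendsto (by continuity) 0)
  have hle : σ / 2 * (1 - 0) * ‖u - x‖ ^ 2 ≤ g u - g x :=
    le_of_tendsto hlim (Filter.eventually_of_mem
      (Ioo_mem_nhdsGT_of_mem ⟨le_refl 0, one_pos⟩) key)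
  norm_num at hle
  linarith

theorem stmt2 {E : Type*} [NormedAddCommGroup E] [InnerProductSpace ℝ E]
    (s : Set E) (hs : s.Nonempty) (hsconv : Convex ℝ s)
    (f h : E → ℝ) (hf : ConvexOn ℝ s f) (hh : ConvexOn ℝ s h)
    (μ : ℝ) (hμ : 0 ≤ μ)
    (hhμ : ConvexOn ℝ s (fun z => h z - μ / 2 * ‖z‖ ^ 2))
    (lam ε : ℝ) (hlam : 0 < lam) (hε : 0 < ε)
    (x y : ℕ → E) (m : ℕ → ℝ) (Γ : ℕ → E → ℝ)
    (hxs : ∀ k, x k ∈ s) (hys : ∀ k, y k ∈ s)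
    (hΓμ : ∀ k, 1 ≤ k → ConvexOn ℝ s (fun u => Γ k u - μ / 2 * ‖u‖ ^ 2))
    (hΓφ : ∀ k, 1 ≤ k → ∀ u ∈ s, Γ k u ≤ f u + h u)
    (hmin : ∀ k, 1 ≤ k →
      IsMinOn (fun u => Γ k u + ‖u - x (k - 1)‖ ^ 2 / (2 * lam)) s (x k))
    (hm : ∀ k, 1 ≤ k → m k = Γ k (x k) + ‖x k - x (k - 1)‖ ^ 2 / (2 * lam))
    (ht : ∀ k, 1 ≤ k → (f (y k) + h (y k)) - m k ≤ ε / 2) :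
    ∀ u ∈ s, ∀ K : ℕ, 1 ≤ K →
      (K : ℝ) ≥
        (if μ = 0 then ‖x 0 - u‖ ^ 2 / (lam * ε)
         else min (‖x 0 - u‖ ^ 2 / (lam * ε))
           (1 / (μ * (lam / (1 + lam * μ))) *
             Real.log (μ * ‖x 0 - u‖ ^ 2 / ε + 1))) →
      ∃ k : ℕ, 1 ≤ k ∧ k ≤ K ∧ (f (y k) + h (y k)) - (f u + h u) ≤ ε := by
  intro u hu K hK hKb
  by_contra hcon
  push_neg at hcon
  -- hcon : ∀ k, 1 ≤ k → k ≤ K → ε < f (y k) + h (y k) - (f u + h u)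
  set q : ℝ := 1 + lam * μ with hq
  have hq1 : 1 ≤ q := by nlinarith
  have hqpos : 0 < q := by linarith
  have dnonneg : ∀ k, (0:ℝ) ≤ ‖x k - u‖ ^ 2 := fun k => sq_nonneg _
  -- the key per-step inequality
  have step : ∀ k, 1 ≤ k → k ≤ K →
      q * ‖x k - u‖ ^ 2 + lam * ε < ‖x (k - 1) - u‖ ^ 2 := by
    intro k hk1 hkK
    have hconvG : ConvexOn ℝ s
        (fun v => (Γ k v + ‖v - x (k - 1)‖ ^ 2 / (2 * lam)) - (μ + 1/lam) / 2 * ‖v‖ ^ 2) := by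
      have haff : ConvexOn ℝ s
          (fun v => (‖x (k - 1)‖ ^ 2 - 2 * ⟪v, x (k - 1)⟫) / (2 * lam)) := by
        refine ⟨hsconv, ?_⟩
        intro a ha b hb p r hp hr hpr
        have hp' : p = 1 - r := by linarith
        subst hp'
        simp only [inner_add_left, real_inner_smul_left, smul_eq_mul]
        apply le_of_eq
        field_simp
        ring
      have heq : (fun v => (Γ k v + ‖v - x (k - 1)‖ ^ 2 / (2 * lam)) - (μ + 1/lam) / 2 * ‖v‖ ^ 2)
          = fun v => (Γ k v - μ / 2 * ‖v‖ ^ 2)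
              + (‖x (k - 1)‖ ^ 2 - 2 * ⟪v, x (k - 1)⟫) / (2 * lam) := by
        funext v
        rw [norm_sub_sq_real]
        field_simp
        ring
      rw [heq]
      exact (hΓμ k hk1).add haff
    have hsm := strong_min hsconv hconvG (hxs k) (hmin k hk1) u hu
    rw [norm_sub_rev u (x k), norm_sub_rev u (x (k-1))] at hsm
    have h2 : Γ k u ≤ f u + h u := hΓφ k hk1 u hu
    have h3 := ht k hk1
    have h4 := hm k hk1
    have h5 := hcon k hk1 hkK
    rw [← h4] at hsm
    -- hsm : m k + (μ + 1/lam)/2 * ‖x k - u‖^2 ≤ Γ k u + ‖x (k-1) - u‖^2/(2*lam)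
    have key2 : (μ + 1/lam) / 2 * ‖x k - u‖ ^ 2 + ε / 2 < ‖x (k - 1) - u‖ ^ 2 / (2 * lam) := by
      linarith
    have h2l : (0:ℝ) < 2 * lam := by linarith
    have hmul := (mul_lt_mul_iff_right₀ h2l).2 key2
    have e1 : 2 * lam * ((μ + 1/lam) / 2 * ‖x k - u‖ ^ 2 + ε / 2)
        = q * ‖x k - u‖ ^ 2 + lam * ε := by
      rw [hq]; field_simp; ring
    have e2 : 2 * lam * (‖x (k - 1) - u‖ ^ 2 / (2 * lam)) = ‖x (k - 1) - u‖ ^ 2 := by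
      field_simp
    rw [e1, e2] at hmul
    exact hmul
  -- Part A : K ≥ d0/(lam ε) leads to contradiction
  have partA : (K:ℝ) ≥ ‖x 0 - u‖ ^ 2 / (lam * ε) → False := by
    intro hKA
    have stepA : ∀ k, 1 ≤ k → k ≤ K →
        ‖x k - u‖ ^ 2 + lam * ε < ‖x (k - 1) - u‖ ^ 2 := by
      intro k h1 h2
      have hs := step k h1 h2
      nlinarith [dnonneg k, mul_nonneg (show (0:ℝ) ≤ q - 1 by linarith) (dnonneg k)]
    have claim : ∀ k, 1 ≤ k → k ≤ K →
        ‖x k - u‖ ^ 2 + (k:ℝ) * (lam * ε) < ‖x 0 - u‖ ^ 2 := by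
      intro k hk1
      induction k, hk1 using Nat.le_induction with
      | base =>
        intro hkK
        have := stepA 1 le_rfl hkK
        norm_num at this ⊢
        linarith
      | succ n hn ih =>
        intro hkK
        have h1 := ih (le_trans (Nat.le_succ n) hkK)
        have h2 := stepA (n+1) (by omega) hkK
        simp only [Nat.add_sub_cancel] at h2
        push_cast
        push_cast at h1
        linarith
    have hfin := claim K hK le_rfl
    have hlamε : (0:ℝ) < lam * ε := mul_pos hlam hε
    have hd0 : ‖x 0 - u‖ ^ 2 ≤ (K:ℝ) * (lam * ε) := (div_le_iff₀ hlamε).1 hKA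
    linarith [dnonneg K]
  by_cases hμ0 : μ = 0
  · exact partA (by rwa [if_pos hμ0] at hKb)
  · rw [if_neg hμ0] at hKb
    have hμpos : 0 < μ := lt_of_le_of_ne hμ (Ne.symm hμ0)
    rcases le_or_gt (‖x 0 - u‖ ^ 2 / (lam * ε))
        (1 / (μ * (lam / q)) * Real.log (μ * ‖x 0 - u‖ ^ 2 / ε + 1)) with hab | hab
    · exact partA (by rwa [min_eq_left hab] at hKb)
    · rw [min_eq_right hab.le] at hKb
      have hεμ : (0:ℝ) < ε / μ := div_pos hε hμpos
      have eqμ : q * (ε / μ) = ε / μ + lam * ε := by rw [hq]; field_simp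
      have claimB : ∀ k, 1 ≤ k → k ≤ K →
          q ^ k * (‖x k - u‖ ^ 2 + ε / μ) < ‖x 0 - u‖ ^ 2 + ε / μ := by
        intro k hk1
        induction k, hk1 using Nat.le_induction with
        | base =>
          intro hkK
          have h2 := step 1 le_rfl hkK
          norm_num at h2 ⊢
          nlinarith [h2, eqμ]
        | succ n hn ih =>
          intro hkK
          have h1 := ih (le_trans (Nat.le_succ n) hkK)
          have h2 := step (n+1) (by omega) hkK
          simp only [Nat.add_sub_cancel] at h2
          have hqn : (0:ℝ) < q ^ n := pow_pos hqpos n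
          have h3 : q * (‖x (n+1) - u‖ ^ 2 + ε / μ) < ‖x n - u‖ ^ 2 + ε / μ := by
            nlinarith [h2, eqμ]
          calc q ^ (n+1) * (‖x (n+1) - u‖ ^ 2 + ε / μ)
              = q ^ n * (q * (‖x (n+1) - u‖ ^ 2 + ε / μ)) := by ring
            _ < q ^ n * (‖x n - u‖ ^ 2 + ε / μ) := (mul_lt_mul_iff_right₀ hqn).2 h3
            _ < ‖x 0 - u‖ ^ 2 + ε / μ := h1
      have hfinB := claimB K hK le_rfl
      have hqKpos : (0:ℝ) < q ^ K := pow_pos hqpos K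
      have hqK : q ^ K < μ * ‖x 0 - u‖ ^ 2 / ε + 1 := by
        have h0 : q ^ K * (ε / μ) ≤ q ^ K * (‖x K - u‖ ^ 2 + ε / μ) := by
          nlinarith [dnonneg K, hqKpos]
        have h1 : q ^ K * (ε / μ) < ‖x 0 - u‖ ^ 2 + ε / μ := lt_of_le_of_lt h0 hfinB
        have e2 : (μ * ‖x 0 - u‖ ^ 2 / ε + 1) * (ε / μ) = ‖x 0 - u‖ ^ 2 + ε / μ := by
          field_simp
        rw [← e2] at h1
        exact lt_of_mul_lt_mul_right h1 hεμ.le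
      have hlog : (K:ℝ) * Real.log q < Real.log (μ * ‖x 0 - u‖ ^ 2 / ε + 1) := by
        have := Real.log_lt_log hqKpos hqK
        rwa [Real.log_pow] at this
      have hlogq : lam * μ / q ≤ Real.log q := by
        have h1 := Real.log_le_sub_one_of_pos (show (0:ℝ) < 1 / q by positivity)
        rw [Real.log_div one_ne_zero (by positivity), Real.log_one] at h1
        have e3 : 1 - 1 / q = lam * μ / q := by
          rw [hq]; field_simp; ring
        linarith [e3]
      have hc1 : (0:ℝ) < μ * (lam / q) := by positivity
      have hL : Real.log (μ * ‖x 0 - u‖ ^ 2 / ε + 1) ≤ (K:ℝ) * (lam * μ / q) := by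
        have := mul_le_mul_of_nonneg_left hKb hc1.le
        have e4 : μ * (lam / q) * (1 / (μ * (lam / q)) * Real.log (μ * ‖x 0 - u‖ ^ 2 / ε + 1))
            = Real.log (μ * ‖x 0 - u‖ ^ 2 / ε + 1) := by
          rw [← mul_assoc, mul_one_div, div_self hc1.ne', one_mul]
        rw [e4] at this
        calc Real.log (μ * ‖x 0 - u‖ ^ 2 / ε + 1) ≤ μ * (lam / q) * (K:ℝ) := this
          _ = (K:ℝ) * (lam * μ / q) := by ring
      have hfinal : (K:ℝ) * (lam * μ / q) ≤ (K:ℝ) * Real.log q :=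
        mul_le_mul_of_nonneg_left hlogq (Nat.cast_nonneg K)
      linarith
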